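/- Let A be an M × N upper triangular NSC matrix and C = [C_1,…,C_M]·A. Set d* = min{(N−i+1)·d_b(C_i) : i = 1,…,M}. If d* = N·d_b(C_1), then d_b(C) = d*. -/

import Mathlib

open scoped Classical
open Finset

noncomputable def bwt {F : Type*} [Field F] (n b : ℕ) [NeZero n] (x : ZMod n → F) : ℕ :=
  (Finset.univ.filter (fun i : ZMod n => ∃ j < b, x (i + (j : ZMod n)) ≠ 0)).card

noncomputable def bDist {F : Type*} [Field F] (n b : ℕ) [NeZero n]
    (C : Set (ZMod n → F)) : ℕ :=
  sInf {w | ∃ u ∈ C, ∃ v ∈ C, u ≠ v ∧ bwt n b (u - v) = w}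

def IsHole {n : ℕ} [NeZero n] (J H : Finset (ZMod n)) : Prop :=
  ∃ (a : ZMod n) (h : ℕ), 0 < h ∧
    H = Finset.image (fun t : ℕ => a + (t : ZMod n) + 1) (Finset.range h) ∧
    (∀ x ∈ H, x ∉ J) ∧ a ∈ J ∧ a + (h : ZMod n) + 1 ∈ J

noncomputable def hSupp {F : Type*} [Field F] {n : ℕ} [NeZero n] (x : ZMod n → F) :
    Finset (ZMod n) :=
  Finset.univ.filter (fun i => x i ≠ 0)
instance neZeroMul {a b : ℕ} [NeZero a] [NeZero b] : NeZero (a * b) :=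
  ⟨Nat.mul_ne_zero (NeZero.ne a) (NeZero.ne b)⟩

noncomputable def mpVec {F : Type*} [Field F] (n N M : ℕ) [NeZero n] [NeZero N]
    (A : Matrix (Fin M) (Fin N) F) (c : Fin M → ZMod n → F) : ZMod (n * N) → F :=
  fun k => ∑ ℓ : Fin M, c ℓ ((k.val % n : ℕ) : ZMod n) *
    A ℓ ⟨k.val / n, Nat.div_lt_of_lt_mul (ZMod.val_lt k)⟩

def mpCode {F : Type*} [Field F] (n N M : ℕ) [NeZero n] [NeZero N]
    (A : Matrix (Fin M) (Fin N) F) (C : Fin M → Set (ZMod n → F)) :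
    Set (ZMod (n * N) → F) :=
  {v | ∃ c : Fin M → ZMod n → F, (∀ ℓ, c ℓ ∈ C ℓ) ∧ v = mpVec n N M A c}

noncomputable def minHamming {F : Type*} [Field F] {N : ℕ} (S : Set (Fin N → F)) : ℕ :=
  sInf {w | ∃ v ∈ S, v ≠ 0 ∧ hammingNorm v = w}

def NSC {F : Type*} [Field F] {M N : ℕ} (A : Matrix (Fin M) (Fin N) F) : Prop :=
  ∀ t : ℕ, 0 < t → ∀ htM : t ≤ M, ∀ g : Fin t → Fin N, StrictMono g →
    (Matrix.of (fun r c : Fin t => A (Fin.castLE htM r) (g c))).det ≠ 0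


section stmt10helpers

lemma natCast_val_self {n : ℕ} [NeZero n] (q : ZMod n) : ((q.val : ℕ) : ZMod n) = q := by
  rw [ZMod.natCast_val, ZMod.cast_id]

lemma posn_lt {n N : ℕ} [NeZero n] [NeZero N] (j : Fin N) (q : ZMod n) :
    j.val * n + q.val < n * N := by
  have h1 : q.val < n := ZMod.val_lt q
  have h2 : j.val + 1 ≤ N := j.isLt
  have h3 : j.val * n + q.val < j.val * n + n := by omega
  have h4 : j.val * n + n = (j.val + 1) * n := by ring
  have h5 : (j.val + 1) * n ≤ N * n := Nat.mul_le_mul_right n h2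
  have h6 : N * n = n * N := Nat.mul_comm N n
  omega

noncomputable def posn {n N : ℕ} [NeZero n] [NeZero N] (j : Fin N) (q : ZMod n) :
    ZMod (n * N) :=
  ((j.val * n + q.val : ℕ) : ZMod (n * N))

lemma val_posn {n N : ℕ} [NeZero n] [NeZero N] (j : Fin N) (q : ZMod n) :
    (posn j q).val = j.val * n + q.val :=
  ZMod.val_cast_of_lt (posn_lt j q)

lemma posn_mod {n N : ℕ} [NeZero n] [NeZero N] (j : Fin N) (q : ZMod n) :
    (posn j q).val % n = q.val := by
  rw [val_posn, Nat.mul_comm, Nat.mul_add_mod, Nat.mod_eq_of_lt (ZMod.val_lt q)]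

lemma posn_div {n N : ℕ} [NeZero n] [NeZero N] (j : Fin N) (q : ZMod n) :
    (posn j q).val / n = j.val := by
  rw [val_posn, Nat.mul_comm j.val n, Nat.mul_add_div (Nat.pos_of_ne_zero (NeZero.ne n)),
    Nat.div_eq_of_lt (ZMod.val_lt q), Nat.add_zero]

noncomputable def phi (n N : ℕ) [NeZero n] [NeZero N] : ZMod (n * N) →+* ZMod n :=
  ZMod.castHom ⟨N, rfl⟩ (ZMod n)

lemma phi_eq_val (n N : ℕ) [NeZero n] [NeZero N] (k : ZMod (n * N)) :
    phi n N k = ((k.val : ℕ) : ZMod n) := by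
  rw [phi, ZMod.castHom_apply, ZMod.natCast_val]

lemma phi_posn {n N : ℕ} [NeZero n] [NeZero N] (j : Fin N) (q : ZMod n) :
    phi n N (posn j q) = q := by
  rw [phi_eq_val, val_posn]
  push_cast
  simp [ZMod.natCast_self, natCast_val_self]

lemma phi_add_nat {n N : ℕ} [NeZero n] [NeZero N] (k : ZMod (n * N)) (j : ℕ) :
    phi n N (k + (j : ZMod (n * N))) = phi n N k + (j : ZMod n) := by
  simp [map_add]

lemma posn_phi {n N : ℕ} [NeZero n] [NeZero N] (k : ZMod (n * N)) :
    posn ⟨k.val / n, Nat.div_lt_of_lt_mul (ZMod.val_lt k)⟩ (phi n N k) = k := by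
  have hv : (phi n N k).val = k.val % n := by
    rw [phi_eq_val, ZMod.val_natCast]
  unfold posn
  rw [hv]
  have h : k.val / n * n + k.val % n = k.val := Nat.div_add_mod' k.val n
  rw [h, ZMod.natCast_val, ZMod.cast_id]

variable {F : Type*} [Field F]

lemma mpVec_sub {n N M : ℕ} [NeZero n] [NeZero N] (A : Matrix (Fin M) (Fin N) F)
    (c c' : Fin M → ZMod n → F) :
    mpVec n N M A c - mpVec n N M A c' = mpVec n N M A (fun ℓ => c ℓ - c' ℓ) := by
  funext k
  simp only [Pi.sub_apply, mpVec, ← Finset.sum_sub_distrib]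
  exact Finset.sum_congr rfl (fun ℓ _ => by ring)

lemma mpVec_posn {n N M : ℕ} [NeZero n] [NeZero N] (A : Matrix (Fin M) (Fin N) F)
    (c : Fin M → ZMod n → F) (j : Fin N) (q : ZMod n) :
    mpVec n N M A c (posn j q) = ∑ ℓ, c ℓ q * A ℓ j := by
  have h1 := posn_mod j q
  have h2 := posn_div j q
  unfold mpVec
  apply Finset.sum_congr rfl
  intro ℓ _
  rw [h1, natCast_val_self]
  have e : (⟨(posn j q).val / n, Nat.div_lt_of_lt_mul (ZMod.val_lt (posn j q))⟩ : Fin N) = j :=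
    Fin.ext h2
  rw [e]

lemma rowCard {n N M : ℕ} [NeZero n] [NeZero N]
    (A : Matrix (Fin M) (Fin N) F) (hA : NSC A)
    (x : Fin M → ZMod n → F) (i : Fin M)
    (hmax : ∀ ℓ, i < ℓ → x ℓ = 0) (q : ZMod n) (hq : x i q ≠ 0) :
    N - i.val ≤ (univ.filter (fun j : Fin N => ∑ ℓ, x ℓ q * A ℓ j ≠ 0)).card := by
  by_contra hcon
  push_neg at hcon
  have hsplit := Finset.card_filter_add_card_filter_not
    (s := (univ : Finset (Fin N))) (fun j : Fin N => ∑ ℓ, x ℓ q * A ℓ j = 0)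
  rw [Finset.card_univ, Fintype.card_fin] at hsplit
  set Z := univ.filter (fun j : Fin N => ∑ ℓ, x ℓ q * A ℓ j = 0) with hZdef
  have hcard : (univ.filter (fun j : Fin N => ∑ ℓ, x ℓ q * A ℓ j ≠ 0)).card
      = (univ.filter (fun j : Fin N => ¬ (∑ ℓ, x ℓ q * A ℓ j = 0))).card := rfl
  rw [hcard] at hcon
  have hZcard : i.val + 1 ≤ Z.card := by omega
  obtain ⟨Z', hZ'Z, hZ'card⟩ := Finset.exists_subset_card_eq hZcard
  have htM : i.val + 1 ≤ M := i.isLt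
  set g := Z'.orderEmbOfFin hZ'card with hgdef
  have hdet := hA (i.val + 1) (Nat.succ_pos _) htM g g.strictMono
  set u : Fin (i.val + 1) → F := fun r => x (Fin.castLE htM r) q with hudef
  have hvm : Matrix.vecMul u (Matrix.of fun r c : Fin (i.val + 1) =>
      A (Fin.castLE htM r) (g c)) = 0 := by
    funext col
    have hgz : ∑ ℓ, x ℓ q * A ℓ (g col) = 0 := by
      have hmem : g col ∈ Z := hZ'Z (Finset.orderEmbOfFin_mem Z' hZ'card col)
      rw [hZdef, Finset.mem_filter] at hmem
      exact hmem.2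
    have hsum : Matrix.vecMul u (Matrix.of fun r c : Fin (i.val + 1) =>
        A (Fin.castLE htM r) (g c)) col
        = ∑ r : Fin (i.val + 1), x (Fin.castLE htM r) q * A (Fin.castLE htM r) (g col) := by
      simp [Matrix.vecMul, dotProduct, hudef]
    rw [Pi.zero_apply, hsum]
    set f : ℕ → F := fun m => if h : m < M then x ⟨m, h⟩ q * A ⟨m, h⟩ (g col) else 0 with hfdef
    have e1 : ∑ r : Fin (i.val + 1), x (Fin.castLE htM r) q * A (Fin.castLE htM r) (g col)
        = ∑ r : Fin (i.val + 1), f r.val := by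
      apply Finset.sum_congr rfl
      intro r _
      rw [hfdef]
      beta_reduce
      rw [dif_pos (lt_of_lt_of_le r.isLt htM)]
      rfl
    have e2 : ∑ m ∈ Finset.range (i.val + 1), f m = ∑ m ∈ Finset.range M, f m := by
      apply Finset.sum_subset (Finset.range_subset_range.2 htM)
      intro m hm hm'
      rw [Finset.mem_range] at hm hm'
      rw [hfdef]
      have hx0 : x (⟨m, hm⟩ : Fin M) = 0 := hmax ⟨m, hm⟩ (by
        rw [Fin.lt_def]
        simpa using hm')
      beta_reduce
      rw [dif_pos hm, hx0]
      simp
    have e3 : ∑ m ∈ Finset.range M, f m = ∑ ℓ : Fin M, x ℓ q * A ℓ (g col) := by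
      rw [← Fin.sum_univ_eq_sum_range f M]
      apply Finset.sum_congr rfl
      intro ℓ _
      rw [hfdef]
      beta_reduce
      rw [dif_pos ℓ.isLt]
    rw [e1, Fin.sum_univ_eq_sum_range f (i.val + 1), e2, e3, hgz]
  have hu0 := Matrix.eq_zero_of_vecMul_eq_zero hdet hvm
  have hlast : u ⟨i.val, Nat.lt_succ_self _⟩ = x i q := rfl
  have : x i q = 0 := by rw [← hlast, hu0]; rfl
  exact hq this

end stmt10helpers

/-- for an upper triangular NSC matrix `A`, if
`d* = min{(N-i+1)·d_b(C_i)}` equals `N·d_b(C_1)`, then `d_b(C) = d*`. -/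
theorem stmt10 {F : Type*} [Field F] {n N M b : ℕ} [NeZero n] [NeZero N] [NeZero M]
    (hMN : M ≤ N) (hb1 : 1 ≤ b) (hbn : b ≤ n)
    (A : Matrix (Fin M) (Fin N) F) (hA : NSC A)
    (htri : ∀ (i : Fin M) (j : Fin N), j.val < i.val → A i j = 0)
    (C : Fin M → Set (ZMod n → F)) (hC : ∀ ℓ, ∃ u ∈ C ℓ, ∃ v ∈ C ℓ, u ≠ v)
    (hd : sInf {w | ∃ i : Fin M, w = (N - i.val) * bDist n b (C i)}
            = N * bDist n b (C 0)) :
    bDist (n * N) b (mpCode n N M A C)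
      = sInf {w | ∃ i : Fin M, w = (N - i.val) * bDist n b (C i)} := by
  classical
  set D := sInf {w | ∃ i : Fin M, w = (N - i.val) * bDist n b (C i)} with hDdef
  -- every entry of row 0 of A is nonzero
  have hM1 : (1 : ℕ) ≤ M := Nat.pos_of_ne_zero (NeZero.ne M)
  have hA0 : ∀ j : Fin N, A 0 j ≠ 0 := by
    intro j
    have hsm : StrictMono (fun _ : Fin 1 => j) := by
      intro a b1 hab
      exact absurd (Subsingleton.elim a b1) (by rintro rfl; exact lt_irrefl a hab)
    have hdet := hA 1 one_pos hM1 (fun _ => j) hsm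
    rw [Matrix.det_fin_one] at hdet
    have e : Fin.castLE hM1 (0 : Fin 1) = (0 : Fin M) := by
      apply Fin.ext
      simp
    simpa [e] using hdet
  have hel : ∀ ℓ, ∃ z, z ∈ C ℓ := fun ℓ => ⟨(hC ℓ).choose, (hC ℓ).choose_spec.1⟩
  -- the minimising pair in C 0
  have hS0ne : {w | ∃ u ∈ C 0, ∃ v ∈ C 0, u ≠ v ∧ bwt n b (u - v) = w}.Nonempty := by
    obtain ⟨u, hu, v, hv, huv⟩ := hC 0
    exact ⟨_, u, hu, v, hv, huv, rfl⟩
  obtain ⟨u₁, hu₁, v₁, hv₁, hu₁v₁, hbd⟩ := Nat.sInf_mem hS0ne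
  have hbd' : bwt n b (u₁ - v₁) = bDist n b (C 0) := hbd
  set c1 : Fin M → ZMod n → F := fun ℓ => if ℓ = 0 then u₁ else (hel ℓ).choose with hc1
  set c2 : Fin M → ZMod n → F := fun ℓ => if ℓ = 0 then v₁ else (hel ℓ).choose with hc2
  have hc1mem : ∀ ℓ, c1 ℓ ∈ C ℓ := by
    intro ℓ
    rw [hc1]
    by_cases h : ℓ = 0
    · subst h; simpa using hu₁
    · simpa [h] using (hel ℓ).choose_spec
  have hc2mem : ∀ ℓ, c2 ℓ ∈ C ℓ := by
    intro ℓ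
    rw [hc2]
    by_cases h : ℓ = 0
    · subst h; simpa using hv₁
    · simpa [h] using (hel ℓ).choose_spec
  set xx : Fin M → ZMod n → F := fun ℓ => c1 ℓ - c2 ℓ with hxxdef
  have hxx0 : xx 0 = u₁ - v₁ := by rw [hxxdef, hc1, hc2]; simp
  have hxxo : ∀ ℓ : Fin M, ℓ ≠ 0 → xx ℓ = 0 := by
    intro ℓ h
    rw [hxxdef, hc1, hc2]
    simp [h]
  have hsubeq : mpVec n N M A c1 - mpVec n N M A c2 = mpVec n N M A xx :=
    (mpVec_sub A c1 c2).trans (by rw [hxxdef])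
  have heval : ∀ k : ZMod (n * N), mpVec n N M A xx k
      = (u₁ - v₁) (phi n N k) * A 0 ⟨k.val / n, Nat.div_lt_of_lt_mul (ZMod.val_lt k)⟩ := by
    intro k
    have h := mpVec_posn A xx (⟨k.val / n, Nat.div_lt_of_lt_mul (ZMod.val_lt k)⟩ : Fin N)
      (phi n N k)
    rw [posn_phi] at h
    have hsingle : ∑ ℓ : Fin M, xx ℓ (phi n N k)
        * A ℓ (⟨k.val / n, Nat.div_lt_of_lt_mul (ZMod.val_lt k)⟩ : Fin N)
        = xx 0 (phi n N k) * A 0 (⟨k.val / n, Nat.div_lt_of_lt_mul (ZMod.val_lt k)⟩ : Fin N) :=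
      Finset.sum_eq_single 0 (fun ℓ _ hℓ => by rw [hxxo ℓ hℓ]; simp)
        (fun habs => absurd (Finset.mem_univ _) habs)
    rw [h, hsingle, hxx0]
  have hnz : ∀ k, mpVec n N M A xx k ≠ 0 ↔ (u₁ - v₁) (phi n N k) ≠ 0 := by
    intro k
    rw [heval k, mul_ne_zero_iff]
    exact ⟨fun h => h.1, fun h => ⟨h, hA0 _⟩⟩
  have hneq : mpVec n N M A c1 ≠ mpVec n N M A c2 := by
    intro h0
    obtain ⟨p, hp⟩ := Function.ne_iff.1 hu₁v₁
    have hz : mpVec n N M A xx = 0 := by rw [← hsubeq, h0, sub_self]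
    have h1 : mpVec n N M A xx (posn (⟨0, Nat.pos_of_ne_zero (NeZero.ne N)⟩ : Fin N) p) = 0 := by
      rw [hz]; rfl
    rw [mpVec_posn] at h1
    have hsingle : ∑ ℓ : Fin M, xx ℓ p * A ℓ (⟨0, Nat.pos_of_ne_zero (NeZero.ne N)⟩ : Fin N)
        = xx 0 p * A 0 (⟨0, Nat.pos_of_ne_zero (NeZero.ne N)⟩ : Fin N) :=
      Finset.sum_eq_single 0 (fun ℓ _ hℓ => by rw [hxxo ℓ hℓ]; simp)
        (fun habs => absurd (Finset.mem_univ _) habs)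
    rw [hsingle, hxx0] at h1
    exact mul_ne_zero (sub_ne_zero_of_ne hp) (hA0 _) h1
  -- counting for the distinguished pair
  have hcount : bwt (n * N) b (mpVec n N M A xx) = N * bwt n b (u₁ - v₁) := by
    unfold bwt
    have hseteq : (univ.filter (fun k : ZMod (n * N) =>
          ∃ j < b, mpVec n N M A xx (k + (j : ZMod (n * N))) ≠ 0))
        = ((univ : Finset (Fin N)) ×ˢ (univ.filter (fun p : ZMod n =>
            ∃ j < b, (u₁ - v₁) (p + (j : ZMod n)) ≠ 0))).image
          (fun pr : Fin N × ZMod n => posn pr.1 pr.2) := by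
      ext k
      simp only [Finset.mem_filter, Finset.mem_image, Finset.mem_product, Finset.mem_univ,
        true_and]
      constructor
      · rintro ⟨j, hj, hne⟩
        refine ⟨(⟨k.val / n, Nat.div_lt_of_lt_mul (ZMod.val_lt k)⟩, phi n N k),
          ⟨j, hj, ?_⟩, posn_phi k⟩
        have h2 := (hnz (k + (j : ZMod (n * N)))).1 hne
        rwa [phi_add_nat] at h2
      · rintro ⟨⟨jc, p⟩, ⟨j, hj, hne⟩, rfl⟩
        refine ⟨j, hj, ?_⟩
        rw [hnz, phi_add_nat, phi_posn]
        exact hne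
    rw [hseteq, Finset.card_image_of_injOn, Finset.card_product, Finset.card_univ,
      Fintype.card_fin]
    rintro ⟨j1, p1⟩ h1 ⟨j2, p2⟩ h2 heq
    simp only at heq
    have hj : j1 = j2 := by
      apply Fin.ext
      calc j1.val = (posn j1 p1).val / n := (posn_div j1 p1).symm
      _ = (posn j2 p2).val / n := by rw [heq]
      _ = j2.val := posn_div j2 p2
    have hpv : p1 = p2 := by
      have hval : p1.val = p2.val := by
        calc p1.val = (posn j1 p1).val % n := (posn_mod j1 p1).symm
        _ = (posn j2 p2).val % n := by rw [heq]
        _ = p2.val := posn_mod j2 p2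
      calc p1 = ((p1.val : ℕ) : ZMod n) := (natCast_val_self p1).symm
      _ = ((p2.val : ℕ) : ZMod n) := by rw [hval]
      _ = p2 := natCast_val_self p2
    rw [Prod.ext_iff]
    exact ⟨hj, hpv⟩
  -- upper bound
  have hupper : bDist (n * N) b (mpCode n N M A C) ≤ D := by
    apply Nat.sInf_le
    refine ⟨mpVec n N M A c1, ⟨c1, hc1mem, rfl⟩, mpVec n N M A c2, ⟨c2, hc2mem, rfl⟩, hneq, ?_⟩
    rw [hsubeq, hcount, hbd']
    exact hd.symm
  -- lower bound
  have hlower : ∀ w ∈ {w | ∃ u ∈ mpCode n N M A C, ∃ v ∈ mpCode n N M A C,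
      u ≠ v ∧ bwt (n * N) b (u - v) = w}, D ≤ w := by
    rintro w ⟨u, ⟨cu, hcu, rfl⟩, v, ⟨cv, hcv, rfl⟩, huv, rfl⟩
    set x : Fin M → ZMod n → F := fun ℓ => cu ℓ - cv ℓ with hxdef
    have hsub : mpVec n N M A cu - mpVec n N M A cv = mpVec n N M A x :=
      (mpVec_sub A cu cv).trans (by rw [hxdef])
    have hxex : ∃ ℓ, x ℓ ≠ 0 := by
      by_contra hall
      push_neg at hall
      apply huv
      have hx0 : x = 0 := funext hall
      have hz : mpVec n N M A cu - mpVec n N M A cv = 0 := by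
        rw [hsub, hx0]
        funext k
        simp [mpVec]
      exact sub_eq_zero.1 hz
    have hSne : (univ.filter (fun ℓ : Fin M => x ℓ ≠ 0)).Nonempty := by
      obtain ⟨ℓ, hℓ⟩ := hxex
      exact ⟨ℓ, Finset.mem_filter.2 ⟨Finset.mem_univ _, hℓ⟩⟩
    set i := (univ.filter (fun ℓ : Fin M => x ℓ ≠ 0)).max' hSne with hidef
    have hxi : x i ≠ 0 := (Finset.mem_filter.1 (Finset.max'_mem _ hSne)).2
    have hmax : ∀ ℓ, i < ℓ → x ℓ = 0 := by
      intro ℓ hℓ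
      by_contra hne
      exact absurd (Finset.le_max' _ ℓ (Finset.mem_filter.2 ⟨Finset.mem_univ _, hne⟩))
        (not_le.2 hℓ)
    have hcine : cu i ≠ cv i := by
      intro hh
      apply hxi
      rw [hxdef]
      simp [hh]
    have hWle : bDist n b (C i) ≤ bwt n b (x i) := by
      apply Nat.sInf_le
      exact ⟨cu i, hcu i, cv i, hcv i, hcine, by rw [hxdef]⟩
    set W := univ.filter (fun p : ZMod n => ∃ j < b, x i (p + (j : ZMod n)) ≠ 0) with hWdef
    set big := univ.filter (fun k : ZMod (n * N) =>
      ∃ j < b, mpVec n N M A x (k + (j : ZMod (n * N))) ≠ 0) with hbigdef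
    have hfib : ∀ p ∈ W, (N - i.val) ≤ (big.filter (fun k => phi n N k = p)).card := by
      intro p hp
      rw [hWdef] at hp
      obtain ⟨-, jp, hjp, hq⟩ := Finset.mem_filter.1 hp
      set q := p + ((jp : ℕ) : ZMod n) with hqdef
      have hrow := rowCard A hA x i hmax q hq
      refine le_trans hrow (Finset.card_le_card_of_injOn
        (fun j : Fin N => posn j q - ((jp : ℕ) : ZMod (n * N))) ?_ ?_)
      · intro j hj
        rw [Finset.mem_coe, Finset.mem_filter] at hj
        rw [Finset.mem_coe, Finset.mem_filter]
        constructor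
        · rw [hbigdef, Finset.mem_filter]
          refine ⟨Finset.mem_univ _, jp, hjp, ?_⟩
        /- window at the shifted start hits `posn j q` -/
          have e : posn j q - ((jp : ℕ) : ZMod (n * N)) + ((jp : ℕ) : ZMod (n * N))
              = posn j q := by ring
          rw [e, mpVec_posn]
          exact hj.2
        · rw [map_sub, phi_posn, map_natCast, hqdef]
          ring
      · intro j1 hj1 j2 hj2 heq
        simp only at heq
        have heq2 : posn j1 q = posn j2 q := by
          have h3 := congrArg (fun z => z + ((jp : ℕ) : ZMod (n * N))) heq
          simpa [sub_add_cancel] using h3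
        apply Fin.ext
        calc j1.val = (posn j1 q).val / n := (posn_div j1 q).symm
        _ = (posn j2 q).val / n := by rw [heq2]
        _ = j2.val := posn_div j2 q
    have hbigcard : W.card * (N - i.val) ≤ big.card := by
      rw [Finset.card_eq_sum_card_fiberwise
        (f := phi n N) (t := (univ : Finset (ZMod n))) (fun k _ => Finset.mem_univ _)]
      calc W.card * (N - i.val) = ∑ _p ∈ W, (N - i.val) := by
            rw [Finset.sum_const, smul_eq_mul]
      _ ≤ ∑ p ∈ W, (big.filter (fun k => phi n N k = p)).card := Finset.sum_le_sum hfib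
      _ ≤ ∑ p ∈ univ, (big.filter (fun k => phi n N k = p)).card :=
            Finset.sum_le_sum_of_subset (Finset.subset_univ W)
    have hDle : D ≤ (N - i.val) * bDist n b (C i) := by
      rw [hDdef]
      exact Nat.sInf_le ⟨i, rfl⟩
    calc D ≤ (N - i.val) * bDist n b (C i) := hDle
    _ ≤ (N - i.val) * bwt n b (x i) := Nat.mul_le_mul le_rfl hWle
    _ = bwt n b (x i) * (N - i.val) := Nat.mul_comm _ _
    _ = W.card * (N - i.val) := by unfold bwt; rw [hWdef]
    _ ≤ big.card := hbigcard
    _ = bwt (n * N) b (mpVec n N M A x) := by unfold bwt; rw [hbigdef]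
    _ = bwt (n * N) b (mpVec n N M A cu - mpVec n N M A cv) := by rw [hsub]
  have hprodne : {w | ∃ u ∈ mpCode n N M A C, ∃ v ∈ mpCode n N M A C,
      u ≠ v ∧ bwt (n * N) b (u - v) = w}.Nonempty :=
    ⟨_, mpVec n N M A c1, ⟨c1, hc1mem, rfl⟩, mpVec n N M A c2, ⟨c2, hc2mem, rfl⟩, hneq, rfl⟩
  exact le_antisymm hupper (le_csInf hprodne hlower)
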